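/- If P is a graph with diam(P) ≥ 4 and r(P) ≥ 3, then there exists a covering of P of size 2 satisfying both conditions A and B, i.e., cov_AB(P) = 2. -/

import Mathlib

open SimpleGraph

variable {V : Type*} {ι : Type*}

/-- Eccentricity (in `ℕ∞`) of a vertex. -/
noncomputable def gecc (G : SimpleGraph V) (v : V) : ℕ∞ := ⨆ u, G.edist v u

/-- Radius of a graph. -/
noncomputable def grad (G : SimpleGraph V) : ℕ∞ := ⨅ v, gecc G v

/-- Diameter of a graph. -/
noncomputable def gdiam (G : SimpleGraph V) : ℕ∞ := ⨆ v, gecc G v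

/-- The center: vertices of minimum eccentricity. -/
def gcenter (G : SimpleGraph V) : Set V := {v | gecc G v = grad G}

/-- Eccentric vertices of `v`. -/
def eccSet (G : SimpleGraph V) (v : V) : Set V := {u | G.edist v u = gecc G v}

/-- The centered periphery. -/
def cperiph (G : SimpleGraph V) : Set V := ⋃ z ∈ gcenter G, eccSet G z

/-- Uniform central graph. -/
def IsUCG (G : SimpleGraph V) : Prop := ∀ c ∈ gcenter G, eccSet G c = cperiph G

/-- Condition A. -/
def CondA (G : SimpleGraph V) (P : ι → Set V) : Prop :=
  ∀ i, ∃ p, p ∉ P i ∧ ∀ q ∈ P i, 2 ≤ G.edist q p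

/-- Condition B. -/
def CondB (G : SimpleGraph V) (P : ι → Set V) : Prop :=
  ∀ i, ∀ p ∈ P i,
    (∃ p', p' ∉ P i ∧ 3 ≤ G.edist p p') ∨ (∃ j, j ≠ i ∧ ∀ q ∈ P j, 2 ≤ G.edist p q)

/-- Condition A′. -/
def CondA' (G : SimpleGraph V) (P : ι → Set V) : Prop :=
  ∀ i, (∃ p, p ∉ P i ∧ ∀ q ∈ P i, 3 ≤ G.edist q p) ∨
    (∃ j, j ≠ i ∧ ∀ q ∈ P i, ∀ q' ∈ P j, 2 ≤ G.edist q q')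

/-- Condition B′. -/
def CondB' (G : SimpleGraph V) (P : ι → Set V) : Prop :=
  ∀ i, ∀ p ∈ P i, ∃ j, j ≠ i ∧ ∀ q ∈ P j, 2 ≤ G.edist p q

/-- Minimum size of a covering satisfying condition A. -/
noncomputable def covA (G : SimpleGraph V) : ℕ :=
  sInf {k | ∃ P : Fin k → Set V, (⋃ i, P i) = Set.univ ∧ CondA G P}

/-- Minimum size of a covering satisfying conditions A and B. -/
noncomputable def covAB (G : SimpleGraph V) : ℕ :=
  sInf {k | ∃ P : Fin k → Set V, (⋃ i, P i) = Set.univ ∧ CondA G P ∧ CondB G P}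

/-- Distance from a vertex to the center. -/
noncomputable def distToCenter (G : SimpleGraph V) (u : V) : ℕ∞ :=
  ⨅ z ∈ gcenter G, G.edist u z

/-- The set of vertices at distance exactly `m` from the center. -/
def Dlevel (G : SimpleGraph V) (m : ℕ) : Set V := {u | distToCenter G u = (m : ℕ∞)}

/-- Vertices of the centered periphery lying on a radial path through `x`. -/
def Pset (G : SimpleGraph V) (r : ℕ) (x : V) : Set V :=
  {p | p ∈ cperiph G ∧ ∃ c ∈ gcenter G, ∃ W : G.Walk c p,
    W.IsPath ∧ W.length = r ∧ x ∈ W.support}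

/-- All vertices lying on some radial path through `x`. -/
def radialSupport (G : SimpleGraph V) (r : ℕ) (x : V) : Set V :=
  {u | ∃ c ∈ gcenter G, ∃ p ∈ cperiph G, ∃ W : G.Walk c p,
    W.IsPath ∧ W.length = r ∧ x ∈ W.support ∧ u ∈ W.support}

/-- If `diam(P) ≥ 4` and `r(P) ≥ 3` then there is a covering of size 2 satisfying
conditions A and B, i.e. `cov_AB(P) = 2`. -/

private lemma enat_le_one {e : ℕ∞} (h : ¬ 2 ≤ e) : e ≤ 1 := by
  cases e with
  | top => exact absurd le_top h
  | coe n => exact_mod_cast Nat.lt_succ_iff.mp (by exact_mod_cast not_le.mp h)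

private lemma enat_le_two {e : ℕ∞} (h : ¬ 3 ≤ e) : e ≤ 2 := by
  cases e with
  | top => exact absurd le_top h
  | coe n => exact_mod_cast Nat.lt_succ_iff.mp (by exact_mod_cast not_le.mp h)

private lemma enat_le_three {e : ℕ∞} (h : ¬ 4 ≤ e) : e ≤ 3 := by
  cases e with
  | top => exact absurd le_top h
  | coe n => exact_mod_cast Nat.lt_succ_iff.mp (by exact_mod_cast not_le.mp h)

private lemma enat_peel {e : ℕ∞} (h : (4:ℕ∞) ≤ 1 + e) : 3 ≤ e := by
  rw [show (4:ℕ∞) = 1 + 3 from rfl] at h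
  exact (WithTop.add_le_add_iff_left WithTop.one_ne_top).mp h

/-- Greedy 2-coloring extension lemma. -/
private lemma colorize {V : Type*} [Fintype V] [DecidableEq V] {R : V → V → Prop}
    (hsymm : ∀ v w, R v w → R w v) (hirr : ∀ v, ¬ R v v) (hex : ∀ v, ∃ w, R v w) :
    ∀ (n : ℕ) (A B : Finset V), (Finset.univ \ (A ∪ B)).card ≤ n → Disjoint A B →
      (∀ v ∈ A, ∃ w ∈ B, R v w) → (∀ v ∈ B, ∃ w ∈ A, R v w) →
      ∃ A' B' : Finset V, A ⊆ A' ∧ B ⊆ B' ∧ Disjoint A' B' ∧ A' ∪ B' = Finset.univ ∧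
        (∀ v ∈ A', ∃ w ∈ B', R v w) ∧ (∀ v ∈ B', ∃ w ∈ A', R v w) := by
  intro n
  induction n with
  | zero =>
    intro A B hcard hdis hA hB
    have h0 : (Finset.univ \ (A ∪ B)) = ∅ := Finset.card_eq_zero.mp (Nat.le_zero.mp hcard)
    have hfull : A ∪ B = Finset.univ := by
      apply Finset.eq_univ_of_forall
      intro v
      by_contra hv
      have : v ∈ Finset.univ \ (A ∪ B) := Finset.mem_sdiff.mpr ⟨Finset.mem_univ v, hv⟩
      simp [h0] at this
    exact ⟨A, B, subset_rfl, subset_rfl, hdis, hfull, hA, hB⟩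
  | succ n ih =>
    intro A B hcard hdis hA hB
    by_cases hfull : A ∪ B = Finset.univ
    · exact ⟨A, B, subset_rfl, subset_rfl, hdis, hfull, hA, hB⟩
    · obtain ⟨u, hu⟩ : (Finset.univ \ (A ∪ B)).Nonempty := by
        rw [Finset.sdiff_nonempty]
        intro h
        exact hfull (Finset.eq_univ_of_forall fun v => h (Finset.mem_univ v))
      have huAB : u ∉ A ∪ B := (Finset.mem_sdiff.mp hu).2
      have huA : u ∉ A := fun h => huAB (Finset.mem_union_left _ h)
      have huB : u ∉ B := fun h => huAB (Finset.mem_union_right _ h)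
      have hcard' : ∀ C : Finset V, A ∪ B ⊆ C → u ∈ C → (Finset.univ \ C).card ≤ n := by
        intro C hsub huC
        have hsub2 : Finset.univ \ C ⊆ (Finset.univ \ (A ∪ B)).erase u := by
          intro z hz
          rw [Finset.mem_sdiff] at hz
          rw [Finset.mem_erase, Finset.mem_sdiff]
          exact ⟨fun h => hz.2 (h ▸ huC), hz.1, fun h => hz.2 (hsub h)⟩
        have := Finset.card_le_card hsub2
        rw [Finset.card_erase_of_mem hu] at this
        omega
      by_cases h1 : ∃ s ∈ A, R u s
      · obtain ⟨s, hsA, hRs⟩ := h1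
        have := ih A (insert u B)
          (hcard' _ (Finset.union_subset_union subset_rfl (Finset.subset_insert _ _))
            (Finset.mem_union_right _ (Finset.mem_insert_self _ _)))
          (Finset.disjoint_insert_right.mpr ⟨huA, hdis⟩)
          (fun v hv => by
            obtain ⟨w, hwB, hw⟩ := hA v hv
            exact ⟨w, Finset.mem_insert_of_mem hwB, hw⟩)
          (fun v hv => by
            rcases Finset.mem_insert.mp hv with rfl | hv
            · exact ⟨s, hsA, hRs⟩
            · exact hB v hv)
        obtain ⟨A', B', hAA', hBB', rest⟩ := this
        exact ⟨A', B', hAA', (Finset.subset_insert _ _).trans hBB', rest⟩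
      · by_cases h2 : ∃ s ∈ B, R u s
        · obtain ⟨s, hsB, hRs⟩ := h2
          have := ih (insert u A) B
            (hcard' _ (Finset.union_subset_union (Finset.subset_insert _ _) subset_rfl)
              (Finset.mem_union_left _ (Finset.mem_insert_self _ _)))
            (Finset.disjoint_insert_left.mpr ⟨huB, hdis⟩)
            (fun v hv => by
              rcases Finset.mem_insert.mp hv with rfl | hv
              · exact ⟨s, hsB, hRs⟩
              · exact hA v hv)
            (fun v hv => by
              obtain ⟨w, hwA, hw⟩ := hB v hv
              exact ⟨w, Finset.mem_insert_of_mem hwA, hw⟩)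
          obtain ⟨A', B', hAA', hBB', rest⟩ := this
          exact ⟨A', B', (Finset.subset_insert _ _).trans hAA', hBB', rest⟩
        · obtain ⟨w, hw⟩ := hex u
          have hwu : w ≠ u := fun h => hirr u (h ▸ hw)
          have hwA : w ∉ A := fun h => h1 ⟨w, h, hw⟩
          have hwB : w ∉ B := fun h => h2 ⟨w, h, hw⟩
          have := ih (insert u A) (insert w B)
            (hcard' _
              ((Finset.union_subset_union (Finset.subset_insert _ _) (Finset.subset_insert _ _)))
              (Finset.mem_union_left _ (Finset.mem_insert_self _ _)))
            (by
              rw [Finset.disjoint_insert_left, Finset.disjoint_insert_right]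
              exact ⟨by simp [huB, hwu.symm], hwA, hdis⟩)
            (fun v hv => by
              rcases Finset.mem_insert.mp hv with rfl | hv
              · exact ⟨w, Finset.mem_insert_self _ _, hw⟩
              · obtain ⟨w', hw'B, hw'⟩ := hA v hv
                exact ⟨w', Finset.mem_insert_of_mem hw'B, hw'⟩)
            (fun v hv => by
              rcases Finset.mem_insert.mp hv with rfl | hv
              · exact ⟨u, Finset.mem_insert_self _ _, hsymm _ _ hw⟩
              · obtain ⟨w', hw'A, hw'⟩ := hB v hv
                exact ⟨w', Finset.mem_insert_of_mem hw'A, hw'⟩)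
          obtain ⟨A', B', hAA', hBB', rest⟩ := this
          exact ⟨A', B', (Finset.subset_insert _ _).trans hAA',
            (Finset.subset_insert _ _).trans hBB', rest⟩

theorem stmt15 [Fintype V] (G : SimpleGraph V) (hd : 4 ≤ gdiam G) (hr : 3 ≤ grad G) :
    (∃ P : Fin 2 → Set V, (⋃ i, P i) = Set.univ ∧ CondA G P ∧ CondB G P) ∧
    covAB G = 2 := by
  classical
  have hxy : ∃ x y : V, 4 ≤ G.edist x y := by
    by_contra hc
    push_neg at hc
    have hle : gdiam G ≤ 3 :=
      iSup_le fun v => iSup_le fun u => enat_le_three (not_le.mpr (hc v u))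
    exact absurd (hd.trans hle) (by decide)
  obtain ⟨x, y, hxy4⟩ := hxy
  have hex : ∀ v : V, ∃ w, 3 ≤ G.edist v w := by
    intro v
    by_contra hc
    push_neg at hc
    have h1 : gecc G v ≤ 2 := iSup_le fun u => enat_le_two (not_le.mpr (hc u))
    have h2 : grad G ≤ 2 := le_trans (iInf_le _ v) h1
    exact absurd (hr.trans h2) (by decide)
  have hsymm : ∀ v w : V, 3 ≤ G.edist v w → 3 ≤ G.edist w v := by
    intro v w h
    rwa [SimpleGraph.edist_comm]
  have hirr : ∀ v : V, ¬ 3 ≤ G.edist v v := by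
    intro v h
    rw [SimpleGraph.edist_self] at h
    exact absurd h (by decide)
  set A0 : Finset V := Finset.univ.filter (fun v => G.edist x v ≤ 1) with hA0def
  set B0 : Finset V := Finset.univ.filter (fun v => G.edist y v ≤ 1) with hB0def
  have hxA0 : x ∈ A0 := by
    simp [hA0def, SimpleGraph.edist_self]
  have hyB0 : y ∈ B0 := by
    simp [hB0def, SimpleGraph.edist_self]
  have hA0mem : ∀ v, v ∈ A0 ↔ G.edist x v ≤ 1 := by
    intro v; simp [hA0def]
  have hB0mem : ∀ v, v ∈ B0 ↔ G.edist y v ≤ 1 := by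
    intro v; simp [hB0def]
  have hdis0 : Disjoint A0 B0 := by
    rw [Finset.disjoint_left]
    intro v hvA hvB
    have h1 : G.edist x v ≤ 1 := (hA0mem v).mp hvA
    have h2 : G.edist v y ≤ 1 := by
      rw [SimpleGraph.edist_comm]; exact (hB0mem v).mp hvB
    have htri : G.edist x y ≤ 2 := by
      calc G.edist x y ≤ G.edist x v + G.edist v y := SimpleGraph.edist_triangle
        _ ≤ 1 + 1 := add_le_add h1 h2
        _ = 2 := by norm_num
    exact absurd (hxy4.trans htri) (by decide)
  have hA0far : ∀ v ∈ A0, ∃ w ∈ B0, 3 ≤ G.edist v w := by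
    intro v hv
    refine ⟨y, hyB0, ?_⟩
    apply enat_peel
    calc (4:ℕ∞) ≤ G.edist x y := hxy4
      _ ≤ G.edist x v + G.edist v y := SimpleGraph.edist_triangle
      _ ≤ 1 + G.edist v y := add_le_add_left ((hA0mem v).mp hv) _
  have hB0far : ∀ v ∈ B0, ∃ w ∈ A0, 3 ≤ G.edist v w := by
    intro v hv
    refine ⟨x, hxA0, ?_⟩
    apply enat_peel
    calc (4:ℕ∞) ≤ G.edist y x := by rwa [SimpleGraph.edist_comm]
      _ ≤ G.edist y v + G.edist v x := SimpleGraph.edist_triangle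
      _ ≤ 1 + G.edist v x := add_le_add_left ((hB0mem v).mp hv) _
  obtain ⟨A', B', hA0A, hB0B, hdis, huniv, hAfar, hBfar⟩ :=
    colorize hsymm hirr hex (Finset.univ \ (A0 ∪ B0)).card A0 B0 le_rfl hdis0 hA0far hB0far
  set P : Fin 2 → Set V := ![(↑A' : Set V), (↑B' : Set V)] with hPdef
  have hP0 : P 0 = (↑A' : Set V) := rfl
  have hP1 : P 1 = (↑B' : Set V) := rfl
  have hcov : (⋃ i, P i) = Set.univ := by
    apply Set.eq_univ_iff_forall.mpr
    intro v
    have hv : v ∈ A' ∪ B' := by rw [huniv]; exact Finset.mem_univ v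
    rcases Finset.mem_union.mp hv with h | h
    · exact Set.mem_iUnion.mpr ⟨0, by rw [hP0]; exact_mod_cast h⟩
    · exact Set.mem_iUnion.mpr ⟨1, by rw [hP1]; exact_mod_cast h⟩
  have hcA : CondA G P := by
    intro i
    fin_cases i
    · refine ⟨y, ?_, ?_⟩
      · show y ∉ (↑A' : Set V)
        intro hy
        exact Finset.disjoint_left.mp hdis (by exact_mod_cast hy) (hB0B hyB0)
      · intro q hq
        by_contra hc
        have h1 : G.edist y q ≤ 1 := by
          rw [SimpleGraph.edist_comm]; exact enat_le_one hc
        have hqB : q ∈ B' := hB0B ((hB0mem q).mpr h1)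
        have hq' : q ∈ (↑A' : Set V) := hq
        exact Finset.disjoint_left.mp hdis (by exact_mod_cast hq') hqB
    · refine ⟨x, ?_, ?_⟩
      · show x ∉ (↑B' : Set V)
        intro hx
        exact Finset.disjoint_left.mp hdis (hA0A hxA0) (by exact_mod_cast hx)
      · intro q hq
        by_contra hc
        have h1 : G.edist x q ≤ 1 := by
          rw [SimpleGraph.edist_comm]; exact enat_le_one hc
        have hqA : q ∈ A' := hA0A ((hA0mem q).mpr h1)
        have hq' : q ∈ (↑B' : Set V) := hq
        exact Finset.disjoint_left.mp hdis hqA (by exact_mod_cast hq')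
  have hcB : CondB G P := by
    intro i p hp
    fin_cases i
    · left
      have hp' : p ∈ (↑A' : Set V) := hp
      obtain ⟨w, hwB, hRw⟩ := hAfar p (by exact_mod_cast hp')
      refine ⟨w, ?_, hRw⟩
      show w ∉ (↑A' : Set V)
      intro hw
      exact Finset.disjoint_left.mp hdis (by exact_mod_cast hw) hwB
    · left
      have hp' : p ∈ (↑B' : Set V) := hp
      obtain ⟨w, hwA, hRw⟩ := hBfar p (by exact_mod_cast hp')
      refine ⟨w, ?_, hRw⟩
      show w ∉ (↑B' : Set V)
      intro hw
      exact Finset.disjoint_left.mp hdis hwA (by exact_mod_cast hw)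
  have h2mem : 2 ∈ {k | ∃ P : Fin k → Set V, (⋃ i, P i) = Set.univ ∧ CondA G P ∧ CondB G P} :=
    ⟨P, hcov, hcA, hcB⟩
  refine ⟨⟨P, hcov, hcA, hcB⟩, ?_⟩
  refine le_antisymm (Nat.sInf_le h2mem) (le_csInf ⟨2, h2mem⟩ ?_)
  intro k hk
  by_contra hlt
  push_neg at hlt
  interval_cases k
  · obtain ⟨Q, hQ, _, _⟩ := hk
    have hxQ : x ∈ ⋃ i, Q i := by rw [hQ]; trivial
    rw [Set.mem_iUnion] at hxQ
    obtain ⟨i, _⟩ := hxQ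
    exact i.elim0
  · obtain ⟨Q, hQ, hQA, _⟩ := hk
    obtain ⟨p, hp, _⟩ := hQA 0
    apply hp
    have hmem : p ∈ ⋃ i, Q i := by rw [hQ]; trivial
    rw [Set.mem_iUnion] at hmem
    obtain ⟨i, hi⟩ := hmem
    rwa [Subsingleton.elim i 0] at hi
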